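/- Let c_1, …, c_n ∈ ℂ be pairwise distinct points with |c_k| < R for all k. The curves z_k(t) = c_k e^{−it/2} (k = 1,…,n) form a solution of the curved n-body problem in the Poincaré disk if and only if the points c_1, …, c_n satisfy the elliptic relative-equilibrium equations. -/

import Mathlib

open Complex ComplexConjugate Finset

/-- The quantity `Θ_{2,(k,j)}` appearing in the denominators of the equations of
motion of the curved `n`-body problem in the Poincaré disk of radius `R`. -/
noncomputable def diskTheta (R : ℝ) (z w : ℂ) : ℝ :=
  ((2 * (z * conj w + w * conj z) * (R : ℂ) ^ 2
      - ((((‖z‖) ^ 2 + R ^ 2) * ((‖w‖) ^ 2 + R ^ 2) : ℝ) : ℂ)) ^ 2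
    - (((R ^ 2 - (‖z‖) ^ 2) ^ 2 * (R ^ 2 - (‖w‖) ^ 2) ^ 2 : ℝ) : ℂ)).re

/-- The curves `z k` form a solution of the curved `n`-body problem in the
Poincaré disk of radius `R` with masses `m`. -/
def IsDiskSolution (R : ℝ) {n : ℕ} (m : Fin n → ℝ) (z : Fin n → ℝ → ℂ) : Prop :=
  ∀ (k : Fin n) (t : ℝ),
    deriv (deriv (z k)) t
      = -2 * conj (z k t) * (deriv (z k) t) ^ 2
          / ((R : ℂ) ^ 2 - (((‖(z k t)‖) ^ 2 : ℝ) : ℂ))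
        + (((R ^ 2 - (‖(z k t)‖) ^ 2) ^ 2 / R ^ 4 : ℝ) : ℂ) *
          ∑ j ∈ Finset.univ.erase k,
            (m j : ℂ) * (R : ℂ) * ((R : ℂ) ^ 2 - (((‖(z k t)‖) ^ 2 : ℝ) : ℂ))
              * ((((R ^ 2 - (‖(z j t)‖) ^ 2) ^ 2 : ℝ)) : ℂ)
              * (z j t - z k t) * ((R : ℂ) ^ 2 - z k t * conj (z j t))
              / (((diskTheta R (z k t) (z j t)) ^ ((3 : ℝ) / 2) : ℝ) : ℂ)

/-- The points `c k` satisfy the elliptic relative-equilibrium equations in the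
Poincaré disk of radius `R` with masses `m`. -/
def EllipticRelEq (R : ℝ) {n : ℕ} (m : Fin n → ℝ) (c : Fin n → ℂ) : Prop :=
  ∀ k : Fin n,
    (R : ℂ) ^ 3 * (((R ^ 2 + (‖(c k)‖) ^ 2 : ℝ)) : ℂ) * c k
        / (((4 * (R ^ 2 - (‖(c k)‖) ^ 2) ^ 4 : ℝ)) : ℂ)
      = -∑ j ∈ Finset.univ.erase k,
          (m j : ℂ) * ((((‖(c j)‖) ^ 2 - R ^ 2) ^ 2 : ℝ) : ℂ)
            * (c j - c k) * ((R : ℂ) ^ 2 - c k * conj (c j))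
            / (((diskTheta R (c k) (c j)) ^ ((3 : ℝ) / 2) : ℝ) : ℂ)

lemma deriv_rot (c : ℂ) :
    deriv (fun t : ℝ => c * Complex.exp (-Complex.I * (t : ℂ) / 2))
      = fun t : ℝ => c * (-Complex.I / 2) * Complex.exp (-Complex.I * (t : ℂ) / 2) := by
  funext t
  have h1 : HasDerivAt (fun t : ℝ => ((t : ℂ))) 1 t := by
    simpa using (hasDerivAt_id t).ofReal_comp
  have h2 : HasDerivAt (fun t : ℝ => -Complex.I * (t : ℂ) / 2) (-Complex.I / 2) t := by
    simpa using (h1.const_mul (-Complex.I)).div_const 2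
  have h3 := (h2.cexp.const_mul c).deriv
  rw [h3]; ring

lemma abs_rot (c : ℂ) (t : ℝ) :
    ‖(c * Complex.exp (-Complex.I * (t : ℂ) / 2))‖ = ‖c‖ := by
  rw [norm_mul, Complex.norm_exp]
  simp

lemma ee_one (t : ℝ) :
    Complex.exp (-Complex.I * (t : ℂ) / 2) * conj (Complex.exp (-Complex.I * (t : ℂ) / 2)) = 1 := by
  rw [Complex.mul_conj]
  norm_cast
  rw [Complex.normSq_eq_norm_sq, Complex.norm_exp]
  simp

lemma mul_rot_conj (a b : ℂ) (t : ℝ) :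
    (a * Complex.exp (-Complex.I * (t : ℂ) / 2)) * conj (b * Complex.exp (-Complex.I * (t : ℂ) / 2))
      = a * conj b := by
  rw [map_mul]
  linear_combination (a * conj b) * ee_one t

lemma theta_rot (R : ℝ) (z w : ℂ) (t : ℝ) :
    diskTheta R (z * Complex.exp (-Complex.I * (t : ℂ) / 2))
      (w * Complex.exp (-Complex.I * (t : ℂ) / 2)) = diskTheta R z w := by
  unfold diskTheta
  rw [abs_rot, abs_rot, mul_rot_conj, mul_rot_conj]

lemma iff_aux (a b v u L S : ℂ) (hw : v * u ≠ 0) (hv : a - b = -L * (v * u)) :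
    (a = b + v * (u * S)) ↔ (L = -S) := by
  constructor
  · intro h
    have h2 : (v * u) * (L + S) = 0 := by linear_combination hv - h
    rcases mul_eq_zero.mp h2 with h3 | h3
    · exact absurd h3 hw
    · linear_combination h3
  · intro h
    linear_combination hv - (v * u) * h

/-- The uniformly rotating curves `t ↦ c_k e^{-it/2}` form a solution of the curved
`n`-body problem in the Poincaré disk if and only if the points `c_1, …, c_n`
satisfy the elliptic relative-equilibrium equations. -/
theorem isDiskSolution_rotating_iff_ellipticRelEq (R : ℝ) (hR : 0 < R)
    (n : ℕ) (hn : 2 ≤ n) (m : Fin n → ℝ) (hm : ∀ k, 0 < m k)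
    (c : Fin n → ℂ) (hc : ∀ k, ‖(c k)‖ < R)
    (hdist : ∀ k j, k ≠ j → c k ≠ c j) :
    IsDiskSolution R m (fun k t => c k * Complex.exp (-Complex.I * (t : ℂ) / 2)) ↔
      EllipticRelEq R m c := by
  have key : ∀ (k : Fin n) (t : ℝ),
      (deriv (deriv (fun t : ℝ => c k * Complex.exp (-Complex.I * (t : ℂ) / 2))) t
        = -2 * conj (c k * Complex.exp (-Complex.I * (t : ℂ) / 2))
            * (deriv (fun t : ℝ => c k * Complex.exp (-Complex.I * (t : ℂ) / 2)) t) ^ 2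
          / ((R : ℂ) ^ 2 - (((‖(c k * Complex.exp (-Complex.I * (t : ℂ) / 2))‖) ^ 2 : ℝ) : ℂ))
        + (((R ^ 2 - (‖(c k * Complex.exp (-Complex.I * (t : ℂ) / 2))‖) ^ 2) ^ 2 / R ^ 4 : ℝ) : ℂ) *
          ∑ j ∈ Finset.univ.erase k,
            (m j : ℂ) * (R : ℂ) * ((R : ℂ) ^ 2 - (((‖(c k * Complex.exp (-Complex.I * (t : ℂ) / 2))‖) ^ 2 : ℝ) : ℂ))
              * ((((R ^ 2 - (‖(c j * Complex.exp (-Complex.I * (t : ℂ) / 2))‖) ^ 2) ^ 2 : ℝ)) : ℂ)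
              * (c j * Complex.exp (-Complex.I * (t : ℂ) / 2) - c k * Complex.exp (-Complex.I * (t : ℂ) / 2))
              * ((R : ℂ) ^ 2 - (c k * Complex.exp (-Complex.I * (t : ℂ) / 2)) * conj (c j * Complex.exp (-Complex.I * (t : ℂ) / 2)))
              / (((diskTheta R (c k * Complex.exp (-Complex.I * (t : ℂ) / 2)) (c j * Complex.exp (-Complex.I * (t : ℂ) / 2))) ^ ((3 : ℝ) / 2) : ℝ) : ℂ))
      ↔ ((R : ℂ) ^ 3 * (((R ^ 2 + (‖(c k)‖) ^ 2 : ℝ)) : ℂ) * c k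
        / (((4 * (R ^ 2 - (‖(c k)‖) ^ 2) ^ 4 : ℝ)) : ℂ)
      = -∑ j ∈ Finset.univ.erase k,
          (m j : ℂ) * ((((‖(c j)‖) ^ 2 - R ^ 2) ^ 2 : ℝ) : ℂ)
            * (c j - c k) * ((R : ℂ) ^ 2 - c k * conj (c j))
            / (((diskTheta R (c k) (c j)) ^ ((3 : ℝ) / 2) : ℝ) : ℂ)) := by
    intro k t
    rw [deriv_rot, deriv_rot]
    simp only [abs_rot, theta_rot, mul_rot_conj]
    simp only [map_mul]
    set E := Complex.exp (-Complex.I * (t : ℂ) / 2) with hE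
    have hE0 : E ≠ 0 := Complex.exp_ne_zero _
    have he : E * conj E = 1 := ee_one t
    have hsum : ∑ j ∈ Finset.univ.erase k,
        (m j : ℂ) * (R : ℂ) * ((R : ℂ) ^ 2 - (((‖(c k)‖) ^ 2 : ℝ) : ℂ))
          * ((((R ^ 2 - (‖(c j)‖) ^ 2) ^ 2 : ℝ)) : ℂ)
          * (c j * E - c k * E) * ((R : ℂ) ^ 2 - c k * conj (c j))
          / (((diskTheta R (c k) (c j)) ^ ((3 : ℝ) / 2) : ℝ) : ℂ)
        = (E * ((R : ℂ) * ((R : ℂ) ^ 2 - (((‖(c k)‖) ^ 2 : ℝ) : ℂ)))) *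
          ∑ j ∈ Finset.univ.erase k,
            (m j : ℂ) * ((((‖(c j)‖) ^ 2 - R ^ 2) ^ 2 : ℝ) : ℂ)
              * (c j - c k) * ((R : ℂ) ^ 2 - c k * conj (c j))
              / (((diskTheta R (c k) (c j)) ^ ((3 : ℝ) / 2) : ℝ) : ℂ) := by
      rw [Finset.mul_sum]
      refine Finset.sum_congr rfl fun j _ => ?_
      push_cast
      ring
    rw [hsum]
    have hE0' : E ≠ 0 := hE0
    have hcE : conj E = E⁻¹ := by
      field_simp
      linear_combination he
    have hconj : conj (c k) * c k = ((‖(c k)‖ : ℂ)) ^ 2 := by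
      rw [mul_comm, Complex.mul_conj, ← Complex.sq_norm]
      push_cast
      ring
    have hdpos : (0 : ℝ) < R ^ 2 - (‖(c k)‖) ^ 2 := by
      nlinarith [norm_nonneg (c k), hc k]
    have hd : ((R : ℂ)) ^ 2 - ((‖(c k)‖ : ℂ)) ^ 2 ≠ 0 := by
      intro h
      have : ((R ^ 2 - (‖(c k)‖) ^ 2 : ℝ) : ℂ) = 0 := by push_cast; linear_combination h
      rw [Complex.ofReal_eq_zero] at this
      exact hdpos.ne' this
    have hR0 : (R : ℂ) ≠ 0 := Complex.ofReal_ne_zero.mpr hR.ne'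
    push_cast
    apply iff_aux
    · exact mul_ne_zero (div_ne_zero (pow_ne_zero _ hd) (pow_ne_zero _ hR0))
        (mul_ne_zero hE0 (mul_ne_zero hR0 hd))
    · rw [hcE]
      field_simp
      linear_combination (-8 * c k) * hconj
        + (4 * c k * ((R : ℂ) ^ 2 - ((‖(c k)‖ : ℂ)) ^ 2 + 2 * c k * conj (c k))) * Complex.I_sq
  constructor
  · intro h k
    exact (key k 0).mp (h k 0)
  · intro h k t
    exact (key k t).mpr (h k)
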